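/- Let M be the double star block matrix [[0, xᵀ, a, 0],[y, 0, 0, 0],[b, 0, 0, zᵀ],[0, 0, w, 0]] with s = x*x, u = y*y, t = z*z, v = w*w all nonzero, and let M† be its Moore–Penrose inverse. Then M†M = diag(1, s⁻¹ x̄ xᵀ, 1, t⁻¹ z̄ zᵀ) and MM† = diag(1, u⁻¹ y y*, 1, v⁻¹ w w*) in block diagonal form. -/

import Mathlib

open Matrix BigOperators

noncomputable section

abbrev Idx (m n : ℕ) := (Unit ⊕ Fin m) ⊕ (Unit ⊕ Fin n)

/-- 4×4 block builder for matrices indexed by a double star digraph vertex set: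
the blocks correspond to the first center, the first star's leaves, the second
center and the second star's leaves, in this order. -/
def blk {m n : ℕ}
    (A11 : ℂ) (A12 : Fin m → ℂ) (A13 : ℂ) (A14 : Fin n → ℂ)
    (A21 : Fin m → ℂ) (A22 : Fin m → Fin m → ℂ) (A23 : Fin m → ℂ) (A24 : Fin m → Fin n → ℂ)
    (A31 : ℂ) (A32 : Fin m → ℂ) (A33 : ℂ) (A34 : Fin n → ℂ)
    (A41 : Fin n → ℂ) (A42 : Fin n → Fin m → ℂ) (A43 : Fin n → ℂ) (A44 : Fin n → Fin n → ℂ) :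
    Matrix (Idx m n) (Idx m n) ℂ :=
  Matrix.of fun i j =>
    match i, j with
    | .inl (.inl _), .inl (.inl _) => A11
    | .inl (.inl _), .inl (.inr k) => A12 k
    | .inl (.inl _), .inr (.inl _) => A13
    | .inl (.inl _), .inr (.inr k) => A14 k
    | .inl (.inr i'), .inl (.inl _) => A21 i'
    | .inl (.inr i'), .inl (.inr k) => A22 i' k
    | .inl (.inr i'), .inr (.inl _) => A23 i'
    | .inl (.inr i'), .inr (.inr k) => A24 i' k
    | .inr (.inl _), .inl (.inl _) => A31
    | .inr (.inl _), .inl (.inr k) => A32 k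
    | .inr (.inl _), .inr (.inl _) => A33
    | .inr (.inl _), .inr (.inr k) => A34 k
    | .inr (.inr i'), .inl (.inl _) => A41 i'
    | .inr (.inr i'), .inl (.inr k) => A42 i' k
    | .inr (.inr i'), .inr (.inl _) => A43 i'
    | .inr (.inr i'), .inr (.inr k) => A44 i' k

/-- The canonical matrix `[[0, xᵀ, a, 0],[y, 0, 0, 0],[b, 0, 0, zᵀ],[0, 0, w, 0]]`
associated with a double star digraph. -/
def dsM {m n : ℕ} (a b : ℂ) (x y : Fin m → ℂ) (z w : Fin n → ℂ) :
    Matrix (Idx m n) (Idx m n) ℂ :=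
  blk 0 x a (fun _ => 0)
      y (fun _ _ => 0) (fun _ => 0) (fun _ _ => 0)
      b (fun _ => 0) 0 z
      (fun _ => 0) (fun _ _ => 0) w (fun _ _ => 0)

/-- `xᵀy`. -/
def dotT {k : ℕ} (x y : Fin k → ℂ) : ℂ := ∑ i, x i * y i

/-- `x*x = ∑ conj xᵢ · xᵢ`. -/
def gram {k : ℕ} (x : Fin k → ℂ) : ℂ := ∑ i, star (x i) * x i

end


lemma sumA {k : ℕ} (c : ℂ) (f : Fin k → ℂ) :
    ∑ i, c * star (f i) * f i = c * gram f := by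
  rw [_root_.gram, Finset.mul_sum]; exact Finset.sum_congr rfl fun i _ => by ring

lemma sumB {k : ℕ} (c : ℂ) (f : Fin k → ℂ) :
    ∑ i, f i * (c * star (f i)) = c * gram f := by
  rw [_root_.gram, Finset.mul_sum]; exact Finset.sum_congr rfl fun i _ => by ring

lemma sumC {k : ℕ} (c d : ℂ) (f : Fin k → ℂ) :
    ∑ i, f i * (c * star (f i) * d) = c * gram f * d := by
  rw [_root_.gram, Finset.mul_sum, Finset.sum_mul]; exact Finset.sum_congr rfl fun i _ => by ring

set_option maxHeartbeats 2000000 in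
theorem dsM_projectors {m n : ℕ} (a b : ℂ) (ha : a ≠ 0) (hb : b ≠ 0)
    (x y : Fin m → ℂ) (z w : Fin n → ℂ)
    (hs : gram x ≠ 0) (hu : gram y ≠ 0) (ht : gram z ≠ 0) (hv : gram w ≠ 0) :
    letI M := dsM a b x y z w
    letI N := blk 0 (fun i => (gram y)⁻¹ * star (y i)) 0 (fun _ => 0)
        (fun i => (gram x)⁻¹ * star (x i)) (fun _ _ => 0) (fun _ => 0)
          (fun i j => -((gram x)⁻¹ * a * (gram w)⁻¹) * star (x i) * star (w j))
        0 (fun _ => 0) 0 (fun j => (gram w)⁻¹ * star (w j))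
        (fun _ => 0) (fun i j => -((gram z)⁻¹ * b * (gram y)⁻¹) * star (z i) * star (y j))
          (fun i => (gram z)⁻¹ * star (z i)) (fun _ _ => 0)
    N * M = blk 1 (fun _ => 0) 0 (fun _ => 0)
        (fun _ => 0) (fun i j => (gram x)⁻¹ * star (x i) * x j) (fun _ => 0) (fun _ _ => 0)
        0 (fun _ => 0) 1 (fun _ => 0)
        (fun _ => 0) (fun _ _ => 0) (fun _ => 0)
          (fun i j => (gram z)⁻¹ * star (z i) * z j) ∧
    M * N = blk 1 (fun _ => 0) 0 (fun _ => 0)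
        (fun _ => 0) (fun i j => (gram y)⁻¹ * y i * star (y j)) (fun _ => 0) (fun _ _ => 0)
        0 (fun _ => 0) 1 (fun _ => 0)
        (fun _ => 0) (fun _ _ => 0) (fun _ => 0)
          (fun i j => (gram w)⁻¹ * w i * star (w j)) := by
  constructor <;>
  · ext i j
    rcases i with i|i <;> rcases j with j|j <;> rcases i with i|i <;> rcases j with j|j <;>
      simp only [dsM, blk, Matrix.mul_apply, Fintype.sum_sum_type, Finset.univ_unique,
        Finset.sum_const, Finset.card_singleton, one_smul, Matrix.of_apply, mul_zero, zero_mul,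
        Finset.sum_singleton, add_zero, zero_add, Finset.sum_const_zero, neg_mul, mul_neg,
        Finset.sum_neg_distrib, sumA, sumB, sumC, smul_zero, smul_neg, neg_zero] <;>
      first
      | rfl
      | exact inv_mul_cancel₀ hs
      | exact inv_mul_cancel₀ hu
      | exact inv_mul_cancel₀ ht
      | exact inv_mul_cancel₀ hv
      | ring1
      | (field_simp [hs, hu, ht, hv]
         try ring1)
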